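/- arXiv:2504.00335 — 2 statements merged into one kernel-verified Lean document; each statement's English description precedes it below -/
import Mathlib

section
/- Let L, Ñ : 𝕋^n × 𝕋^ℓ → ℝ^{2n×n} and Ω(K): 𝕋^n × 𝕋^ℓ → ℝ^{2n×2n} with Ω antisymmetric pointwise, and suppose Lᵀ Ω(K) L = O_n and Ñᵀ Ω(K) L = I_n pointwise. Define A := −(1/2) Ñᵀ Ω(K) Ñ and N := L A + Ñ. Then Nᵀ Ω(K) N = O_n and Nᵀ Ω(K) L = I_n pointwise; consequently, the 2n×2n frame P = (L N) satisfies Pᵀ Ω(K) P = Ω₀, where Ω₀ = [[0, −I_n],[I_n, 0]]. -/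
open Matrix

/-- symplectic adaptation of the frame. If `Lᵀ Ω(K) L = 0` and
`Ñᵀ Ω(K) L = I` pointwise, with `Ω(K)` antisymmetric, then with
`A := −(1/2) Ñᵀ Ω(K) Ñ` and `N := L A + Ñ` one has `Nᵀ Ω(K) N = 0`,
`Nᵀ Ω(K) L = I`, and the frame `P = (L N)` satisfies `Pᵀ Ω(K) P = Ω₀`. -/
theorem symplectic_frame_adaptation (n ℓ : ℕ)
    (L Ntilde : (Fin n → ℝ) × (Fin ℓ → ℝ) → Matrix (Fin n ⊕ Fin n) (Fin n) ℝ)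
    (ΩK : (Fin n → ℝ) × (Fin ℓ → ℝ) → Matrix (Fin n ⊕ Fin n) (Fin n ⊕ Fin n) ℝ)
    (hanti : ∀ x, (ΩK x)ᵀ = -ΩK x)
    (hLL : ∀ x, (L x)ᵀ * ΩK x * L x = 0)
    (hNL : ∀ x, (Ntilde x)ᵀ * ΩK x * L x = 1) :
    ∀ x,
      let A : Matrix (Fin n) (Fin n) ℝ := -((1 : ℝ) / 2) • ((Ntilde x)ᵀ * ΩK x * Ntilde x)
      let N : Matrix (Fin n ⊕ Fin n) (Fin n) ℝ := L x * A + Ntilde x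
      Nᵀ * ΩK x * N = 0 ∧ Nᵀ * ΩK x * L x = 1 ∧
        (Matrix.fromCols (L x) N)ᵀ * ΩK x * Matrix.fromCols (L x) N =
          Matrix.fromBlocks 0 (-1) 1 0 := by
  intro x A N
  set Ω := ΩK x with hΩ
  have hB : ((Ntilde x)ᵀ * Ω * Ntilde x)ᵀ = -((Ntilde x)ᵀ * Ω * Ntilde x) := by
    calc ((Ntilde x)ᵀ * Ω * Ntilde x)ᵀ = (Ntilde x)ᵀ * Ωᵀ * Ntilde x := by
          simp [Matrix.transpose_mul, Matrix.mul_assoc]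
      _ = -((Ntilde x)ᵀ * Ω * Ntilde x) := by rw [hanti x]; simp [Matrix.mul_assoc, hΩ]
  have hAT : Aᵀ = -A := by
    simp only [A, Matrix.transpose_smul, hB]
    simp [hanti x, Matrix.mul_assoc]
  have hLN : (L x)ᵀ * Ω * Ntilde x = -1 := by
    have := congrArg Matrix.transpose (hNL x)
    simp [Matrix.transpose_mul, Matrix.mul_assoc, hanti x] at this
    -- this : L xᵀ * (Ω * Ntilde x) = -1 (or similar)
    calc (L x)ᵀ * Ω * Ntilde x = -((L x)ᵀ * (-Ω) * Ntilde x) := by simp [Matrix.mul_assoc]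
      _ = -((L x)ᵀ * Ωᵀ * Ntilde x) := by rw [hanti x]
      _ = -(((Ntilde x)ᵀ * Ω * L x)ᵀ) := by simp [Matrix.transpose_mul, Matrix.mul_assoc]
      _ = -1 := by rw [hNL x]; simp
  have hNL' : Nᵀ * Ω * L x = 1 := by
    simp only [N, Matrix.transpose_add, Matrix.transpose_mul, Matrix.add_mul]
    rw [Matrix.mul_assoc Aᵀ, Matrix.mul_assoc Aᵀ, hLL x, hNL x]
    simp
  have hNN : Nᵀ * Ω * N = 0 := by
    have h1 : Nᵀ * Ω * N = Nᵀ * Ω * (L x) * A + Nᵀ * Ω * Ntilde x := by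
      simp only [N, Matrix.mul_add, Matrix.mul_assoc]
    have h2 : Nᵀ * Ω * Ntilde x = Aᵀ * ((L x)ᵀ * Ω * Ntilde x) + (Ntilde x)ᵀ * Ω * Ntilde x := by
      simp only [N, Matrix.transpose_add, Matrix.transpose_mul, Matrix.add_mul, Matrix.mul_assoc]
    rw [h1, hNL', h2, hLN, hAT]
    simp only [Matrix.one_mul, Matrix.neg_mul, Matrix.mul_neg, neg_neg, Matrix.mul_one]
    simp only [A]
    module
  refine ⟨hNN, hNL', ?_⟩
  have hLN' : (L x)ᵀ * Ω * N = -1 := by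
    simp only [N, Matrix.mul_add]
    rw [← Matrix.mul_assoc, hLN, hLL x]
    simp
  rw [Matrix.transpose_fromCols, Matrix.fromRows_mul, Matrix.fromRows_mul_fromCols,
    hLL x, hLN', hNL', hNN]
end

section
/- The triangular cohomological system 𝔏_{ω,α} ξ^N = η^N has a solution with zero-average only if ⟨η^N⟩ = 0; moreover, if ⟨η^N⟩ = 0 and ⟨T⟩ is invertible, the average ξ^N₀ = ⟨ξ^N⟩ is uniquely determined by the solvability (zero-average) condition of the second equation 𝔏_{ω,α} ξ^L = η^L − T ξ^N, namely ξ^N₀ = ⟨T⟩⁻¹ ⟨η^L − T R_{ω,α}(η^N)⟩. -/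
open scoped BigOperators Real
open MeasureTheory Matrix

/-- A real-valued trigonometric polynomial on the torus `𝕋^n × 𝕋^ℓ`. -/
def IsTrigPolyOnTorus (n ℓ : ℕ) (f : (Fin n → ℝ) × (Fin ℓ → ℝ) → ℝ) : Prop :=
  ∃ (F : Finset ((Fin n → ℤ) × (Fin ℓ → ℤ))) (c : ((Fin n → ℤ) × (Fin ℓ → ℤ)) → ℂ),
    ∀ x, (f x : ℂ) = ∑ k ∈ F, c k *
      Complex.exp (2 * (π : ℂ) * Complex.I *
        (((∑ i, (k.1 i : ℝ) * x.1 i) + ∑ j, (k.2 j : ℝ) * x.2 j : ℝ) : ℂ))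

/-- The torus average of a scalar function (integral over a fundamental domain). -/
noncomputable def torusAvg (n ℓ : ℕ) (f : (Fin n → ℝ) × (Fin ℓ → ℝ) → ℝ) : ℝ :=
  ∫ x in Set.Icc (0 : (Fin n → ℝ) × (Fin ℓ → ℝ)) 1, f x

namespace TriAux

variable {n ℓ : ℕ}

/-- abbreviation for the phase linear form -/
noncomputable def lin (k : (Fin n → ℤ) × (Fin ℓ → ℤ)) (x : (Fin n → ℝ) × (Fin ℓ → ℝ)) : ℝ :=
  (∑ i, (k.1 i : ℝ) * x.1 i) + ∑ j, (k.2 j : ℝ) * x.2 j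

noncomputable def ek (k : (Fin n → ℤ) × (Fin ℓ → ℤ)) (x : (Fin n → ℝ) × (Fin ℓ → ℝ)) : ℂ :=
  Complex.exp (2 * (π : ℂ) * Complex.I * ((lin k x : ℝ) : ℂ))

lemma lin_add (k m : (Fin n → ℤ) × (Fin ℓ → ℤ)) (x) :
    lin (k + m) x = lin k x + lin m x := by
  simp only [lin, Prod.fst_add, Prod.snd_add, Pi.add_apply]
  push_cast
  simp [add_mul, Finset.sum_add_distrib]
  ring

lemma lin_zero (x : (Fin n → ℝ) × (Fin ℓ → ℝ)) : lin (0 : (Fin n → ℤ) × (Fin ℓ → ℤ)) x = 0 := by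
  simp [lin]

lemma ek_zero (x : (Fin n → ℝ) × (Fin ℓ → ℝ)) : ek (0 : (Fin n → ℤ) × (Fin ℓ → ℤ)) x = 1 := by
  simp [ek, lin_zero]

lemma ek_mul (k m : (Fin n → ℤ) × (Fin ℓ → ℤ)) (x) :
    ek k x * ek m x = ek (k + m) x := by
  rw [ek, ek, ek, ← Complex.exp_add, lin_add]
  push_cast
  ring_nf

noncomputable def linCLM (k : (Fin n → ℤ) × (Fin ℓ → ℤ)) :
    ((Fin n → ℝ) × (Fin ℓ → ℝ)) →L[ℝ] ℝ :=
  (∑ i, (k.1 i : ℝ) • (ContinuousLinearMap.proj i).comp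
      (ContinuousLinearMap.fst ℝ (Fin n → ℝ) (Fin ℓ → ℝ))) +
  (∑ j, (k.2 j : ℝ) • (ContinuousLinearMap.proj j).comp
      (ContinuousLinearMap.snd ℝ (Fin n → ℝ) (Fin ℓ → ℝ)))

lemma linCLM_apply (k : (Fin n → ℤ) × (Fin ℓ → ℤ)) (x) : linCLM k x = lin k x := by
  simp [linCLM, lin, ContinuousLinearMap.sum_apply, smul_eq_mul]

lemma continuous_lin (k : (Fin n → ℤ) × (Fin ℓ → ℤ)) : Continuous (lin k) := by
  have : lin k = fun x => linCLM k x := by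
    funext x; rw [linCLM_apply]
  rw [this]
  exact (linCLM k).continuous

lemma continuous_ek (k : (Fin n → ℤ) × (Fin ℓ → ℤ)) : Continuous (ek k) := by
  exact (continuous_const.mul (Complex.continuous_ofReal.comp (continuous_lin k))).cexp

noncomputable def ekD (k : (Fin n → ℤ) × (Fin ℓ → ℤ)) (x : (Fin n → ℝ) × (Fin ℓ → ℝ)) :
    ((Fin n → ℝ) × (Fin ℓ → ℝ)) →L[ℝ] ℂ :=
  ek k x • ((2 * (π : ℂ) * Complex.I) • (Complex.ofRealCLM.comp (linCLM k)))

lemma hasFDerivAt_ek (k : (Fin n → ℤ) × (Fin ℓ → ℤ)) (x) :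
    HasFDerivAt (ek k) (ekD k x) x := by
  have h1 : HasFDerivAt (fun y => 2 * (π : ℂ) * Complex.I * ((lin k y : ℝ) : ℂ))
      ((2 * (π : ℂ) * Complex.I) • (Complex.ofRealCLM.comp (linCLM k))) x := by
    have h0 := ((Complex.ofRealCLM.comp (linCLM k)).hasFDerivAt (x := x)).const_smul
      (2 * (π : ℂ) * Complex.I)
    have h2 : (fun y => 2 * (π : ℂ) * Complex.I * ((lin k y : ℝ) : ℂ)) =
        fun y => (2 * (π : ℂ) * Complex.I) • (Complex.ofRealCLM.comp (linCLM k)) y := by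
      funext y
      simp [linCLM_apply, smul_eq_mul]
    rw [h2]
    exact h0
  exact h1.cexp

lemma ekD_apply (k : (Fin n → ℤ) × (Fin ℓ → ℤ)) (x v) :
    ekD k x v = ek k x * (2 * (π : ℂ) * Complex.I * ((lin k v : ℝ) : ℂ)) := by
  simp [ekD, linCLM_apply, smul_eq_mul]

lemma oneD (m : ℤ) :
    ∫ t in Set.Icc (0:ℝ) 1, Complex.exp (2 * (π:ℂ) * Complex.I * (m:ℂ) * (t:ℂ))
      = if m = 0 then 1 else 0 := by
  rw [integral_Icc_eq_integral_Ioc, ← intervalIntegral.integral_of_le (zero_le_one)]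
  by_cases hm : m = 0
  · simp [hm]
  · have hc : (2 * (π:ℂ) * Complex.I * (m:ℂ)) ≠ 0 := by
      simp [Complex.I_ne_zero, Real.pi_ne_zero, Complex.ofReal_ne_zero, hm]
    rw [if_neg hm]
    have := integral_exp_mul_complex (a := (0:ℝ)) (b := 1) hc
    rw [this]
    have h1 : Complex.exp (2 * (π:ℂ) * Complex.I * (m:ℂ) * (1:ℝ)) = 1 := by
      push_cast
      rw [mul_one]
      have := Complex.exp_int_mul_two_pi_mul_I m
      rw [← this]
      ring_nf
    have h0 : Complex.exp (2 * (π:ℂ) * Complex.I * (m:ℂ) * (0:ℝ)) = 1 := by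
      push_cast
      simp
    rw [h1, h0]
    simp

lemma piD (d : ℕ) (a : Fin d → ℤ) :
    ∫ x in Set.Icc (0 : Fin d → ℝ) 1,
        Complex.exp (2 * (π:ℂ) * Complex.I * ((∑ i, (a i : ℝ) * x i : ℝ) : ℂ))
      = if a = 0 then 1 else 0 := by
  have hfact : ∀ x : Fin d → ℝ,
      Complex.exp (2 * (π:ℂ) * Complex.I * ((∑ i, (a i : ℝ) * x i : ℝ) : ℂ))
        = ∏ i, Complex.exp (2 * (π:ℂ) * Complex.I * (a i : ℂ) * ((x i : ℝ) : ℂ)) := by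
    intro x
    rw [← Complex.exp_sum]
    congr 1
    push_cast
    rw [Finset.mul_sum]
    congr 1; funext i; ring
  simp_rw [hfact]
  -- indicator trick
  have hmeas : MeasurableSet (Set.Icc (0 : Fin d → ℝ) 1) := measurableSet_Icc
  rw [← MeasureTheory.integral_indicator hmeas]
  have hind : (Set.Icc (0 : Fin d → ℝ) 1).indicator
      (fun x => ∏ i, Complex.exp (2 * (π:ℂ) * Complex.I * (a i : ℂ) * ((x i : ℝ) : ℂ)))
      = fun x => ∏ i, (Set.Icc (0:ℝ) 1).indicator
          (fun t => Complex.exp (2 * (π:ℂ) * Complex.I * (a i : ℂ) * ((t : ℝ) : ℂ))) (x i) := by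
    funext x
    by_cases hx : x ∈ Set.Icc (0 : Fin d → ℝ) 1
    · rw [Set.indicator_of_mem hx]
      have : ∀ i, x i ∈ Set.Icc (0:ℝ) 1 := by
        intro i
        exact ⟨hx.1 i, hx.2 i⟩
      exact Finset.prod_congr rfl fun i _ => (Set.indicator_of_mem (this i)
        (fun t : ℝ => Complex.exp (2 * (π:ℂ) * Complex.I * (a i : ℂ) * ((t : ℝ) : ℂ)))).symm
    · rw [Set.indicator_of_notMem hx]
      have : ∃ i, x i ∉ Set.Icc (0:ℝ) 1 := by
        by_contra h
        push_neg at h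
        exact hx ⟨fun i => (h i).1, fun i => (h i).2⟩
      obtain ⟨i, hi⟩ := this
      rw [eq_comm]
      apply Finset.prod_eq_zero (Finset.mem_univ i)
      rw [Set.indicator_of_notMem hi]
  rw [hind]
  rw [MeasureTheory.volume_pi, MeasureTheory.integral_fintype_prod_eq_prod (ι := Fin d)
    (f := fun i t => (Set.Icc (0:ℝ) 1).indicator
      (fun t => Complex.exp (2 * (π:ℂ) * Complex.I * (a i : ℂ) * ((t : ℝ) : ℂ))) t)]
  have : ∀ i, (∫ t : ℝ, (Set.Icc (0:ℝ) 1).indicator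
      (fun t => Complex.exp (2 * (π:ℂ) * Complex.I * (a i : ℂ) * ((t : ℝ) : ℂ))) t)
      = if a i = 0 then 1 else 0 := by
    intro i
    rw [MeasureTheory.integral_indicator measurableSet_Icc]
    exact oneD (a i)
  simp_rw [this]
  by_cases ha : a = 0
  · simp [ha]
  · rw [if_neg ha]
    have : ∃ i, a i ≠ 0 := by
      by_contra h
      push_neg at h
      exact ha (funext h)
    obtain ⟨i, hi⟩ := this
    apply Finset.prod_eq_zero (Finset.mem_univ i)
    rw [if_neg hi]

lemma vol_box : (volume (Set.Icc (0 : (Fin n → ℝ) × (Fin ℓ → ℝ)) 1)) = 1 := by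
  rw [← Set.Icc_prod_Icc, MeasureTheory.Measure.volume_eq_prod, MeasureTheory.Measure.prod_prod,
    ← Set.pi_univ_Icc, MeasureTheory.volume_pi_pi, ← Set.pi_univ_Icc, MeasureTheory.volume_pi_pi]
  simp [Real.volume_Icc]

lemma integral_ek (k : (Fin n → ℤ) × (Fin ℓ → ℤ)) :
    ∫ x in Set.Icc (0 : (Fin n → ℝ) × (Fin ℓ → ℝ)) 1, ek k x
      = if k = 0 then 1 else 0 := by
  have hsplit : ∀ x : (Fin n → ℝ) × (Fin ℓ → ℝ), ek k x =
      Complex.exp (2 * (π:ℂ) * Complex.I * ((∑ i, (k.1 i : ℝ) * x.1 i : ℝ) : ℂ)) *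
      Complex.exp (2 * (π:ℂ) * Complex.I * ((∑ j, (k.2 j : ℝ) * x.2 j : ℝ) : ℂ)) := by
    intro x
    rw [ek, lin, ← Complex.exp_add]
    congr 1
    push_cast
    ring
  simp_rw [hsplit]
  have h0 : (0 : (Fin n → ℝ) × (Fin ℓ → ℝ)) = ((0 : Fin n → ℝ), (0 : Fin ℓ → ℝ)) := rfl
  have h1 : (1 : (Fin n → ℝ) × (Fin ℓ → ℝ)) = ((1 : Fin n → ℝ), (1 : Fin ℓ → ℝ)) := rfl
  rw [h0, h1, ← Set.Icc_prod_Icc, MeasureTheory.Measure.volume_eq_prod]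
  rw [MeasureTheory.setIntegral_prod_mul
    (f := fun y : Fin n → ℝ => Complex.exp (2 * (π:ℂ) * Complex.I * ((∑ i, (k.1 i : ℝ) * y i : ℝ) : ℂ)))
    (g := fun y : Fin ℓ → ℝ => Complex.exp (2 * (π:ℂ) * Complex.I * ((∑ j, (k.2 j : ℝ) * y j : ℝ) : ℂ)))]
  rw [piD n k.1, piD ℓ k.2]
  by_cases hk : k = 0
  · simp [hk, Prod.fst_zero, Prod.snd_zero]
  · rw [if_neg hk]
    have : k.1 ≠ 0 ∨ k.2 ≠ 0 := by
      by_contra h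
      push_neg at h
      exact hk (Prod.ext h.1 h.2)
    rcases this with h | h
    · rw [if_neg h, zero_mul]
    · rw [if_neg h, mul_zero]


/-! ### Representation machinery -/

def Rep (f : (Fin n → ℝ) × (Fin ℓ → ℝ) → ℝ)
    (F : Finset ((Fin n → ℤ) × (Fin ℓ → ℤ))) (c : ((Fin n → ℤ) × (Fin ℓ → ℤ)) → ℂ) : Prop :=
  ∀ x, ((f x : ℝ) : ℂ) = ∑ k ∈ F, c k * ek k x

variable {f : (Fin n → ℝ) × (Fin ℓ → ℝ) → ℝ} {F : Finset ((Fin n → ℤ) × (Fin ℓ → ℤ))}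
  {c : ((Fin n → ℤ) × (Fin ℓ → ℤ)) → ℂ}

lemma hasFDerivAt_g (F : Finset ((Fin n → ℤ) × (Fin ℓ → ℤ)))
    (c : ((Fin n → ℤ) × (Fin ℓ → ℤ)) → ℂ) (x) :
    HasFDerivAt (fun y => ∑ k ∈ F, c k * ek k y) (∑ k ∈ F, c k • ekD k x) x := by
  apply HasFDerivAt.fun_sum
  intro k _
  exact (hasFDerivAt_ek k x).const_mul (c k)

lemma Rep.hasFDerivAt (h : Rep f F c) (x) :
    HasFDerivAt f (Complex.reCLM.comp (∑ k ∈ F, c k • ekD k x)) x := by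
  have hg := hasFDerivAt_g F c x
  have := Complex.reCLM.hasFDerivAt.comp x hg
  have hfun : (Complex.reCLM ∘ fun y => ∑ k ∈ F, c k * ek k y) = f := by
    funext y
    simp only [Function.comp_apply, Complex.reCLM_apply, ← h y, Complex.ofReal_re]
  rwa [hfun] at this

lemma Rep.differentiableAt (h : Rep f F c) (x) : DifferentiableAt ℝ f x :=
  (h.hasFDerivAt x).differentiableAt

lemma Rep.continuous (h : Rep f F c) : Continuous f := by
  have : f = fun y => (∑ k ∈ F, c k * ek k y).re := by
    funext y; rw [← h y, Complex.ofReal_re]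
  rw [this]
  exact Complex.continuous_re.comp (continuous_finset_sum _ fun k _ => continuous_const.mul (continuous_ek k))

lemma Rep.im_deriv_zero (h : Rep f F c) (x) (v) :
    ((∑ k ∈ F, c k • ekD k x) v).im = 0 := by
  have hg := hasFDerivAt_g F c x
  have him := Complex.imCLM.hasFDerivAt.comp x hg
  have hfun : (Complex.imCLM ∘ fun y => ∑ k ∈ F, c k * ek k y) = fun _ => (0 : ℝ) := by
    funext y
    simp only [Function.comp_apply, Complex.imCLM_apply, ← h y, Complex.ofReal_im]
  rw [hfun] at him
  have := him.unique (hasFDerivAt_const (0:ℝ) x)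
  calc ((∑ k ∈ F, c k • ekD k x) v).im
      = (Complex.imCLM.comp (∑ k ∈ F, c k • ekD k x)) v := rfl
    _ = (0 : ((Fin n → ℝ) × (Fin ℓ → ℝ)) →L[ℝ] ℝ) v := by rw [this]
    _ = 0 := rfl

lemma Rep.fderiv_eq (h : Rep f F c) (x v) :
    ((fderiv ℝ f x v : ℝ) : ℂ) = (∑ k ∈ F, c k • ekD k x) v := by
  have hd := (h.hasFDerivAt x).fderiv
  apply Complex.ext
  · rw [Complex.ofReal_re, hd]
    rfl
  · rw [Complex.ofReal_im, h.im_deriv_zero x v]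

/-- The directional derivative of a trig poly is again a trig poly,
with explicitly transformed coefficients. -/
lemma Rep.fderiv_rep (h : Rep f F c) (v) :
    Rep (fun x => fderiv ℝ f x v) F
      (fun k => c k * (2 * (π:ℂ) * Complex.I * ((lin k v : ℝ) : ℂ))) := by
  intro x
  rw [h.fderiv_eq x v]
  rw [ContinuousLinearMap.sum_apply]
  apply Finset.sum_congr rfl
  intro k _
  rw [ContinuousLinearMap.smul_apply, ekD_apply]
  simp only [smul_eq_mul]
  ring

lemma Rep.integrableOn (h : Rep f F c) :
    IntegrableOn f (Set.Icc (0 : (Fin n → ℝ) × (Fin ℓ → ℝ)) 1) volume :=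
  h.continuous.integrableOn_Icc

lemma integrableOn_ek (k : (Fin n → ℤ) × (Fin ℓ → ℤ)) :
    IntegrableOn (ek k) (Set.Icc (0 : (Fin n → ℝ) × (Fin ℓ → ℝ)) 1) volume :=
  (continuous_ek k).integrableOn_Icc

/-- Integral of a trig poly over the box. -/
lemma Rep.integral (h : Rep f F c) :
    ((∫ x in Set.Icc (0 : (Fin n → ℝ) × (Fin ℓ → ℝ)) 1, f x : ℝ) : ℂ)
      = if (0 : (Fin n → ℤ) × (Fin ℓ → ℤ)) ∈ F then c 0 else 0 := by
  have key := (integral_ofReal (𝕜 := ℂ) (f := f)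
    (μ := volume.restrict (Set.Icc (0 : (Fin n → ℝ) × (Fin ℓ → ℝ)) 1))).symm
  refine key.trans ?_
  calc ∫ x in Set.Icc (0 : (Fin n → ℝ) × (Fin ℓ → ℝ)) 1, ((f x : ℝ) : ℂ)
      = ∫ x in Set.Icc (0 : (Fin n → ℝ) × (Fin ℓ → ℝ)) 1, ∑ k ∈ F, c k * ek k x := by
        apply integral_congr_ae
        filter_upwards with x using h x
    _ = ∑ k ∈ F, ∫ x in Set.Icc (0 : (Fin n → ℝ) × (Fin ℓ → ℝ)) 1, c k * ek k x := by
        apply integral_finset_sum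
        intro k _
        exact (integrableOn_ek k).const_mul _
    _ = ∑ k ∈ F, c k * ∫ x in Set.Icc (0 : (Fin n → ℝ) × (Fin ℓ → ℝ)) 1, ek k x := by
        simp_rw [integral_const_mul]
    _ = ∑ k ∈ F, c k * (if k = 0 then 1 else 0) := by
        simp_rw [integral_ek]
    _ = ∑ k ∈ F, (if k = 0 then c k else 0) := by
        apply Finset.sum_congr rfl
        intro k _
        by_cases hk : k = 0 <;> simp [hk]
    _ = if (0 : (Fin n → ℤ) × (Fin ℓ → ℤ)) ∈ F then c 0 else 0 := by
        rw [Finset.sum_ite_eq' F 0 c]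

/-- Coefficient extraction: a trig poly that vanishes identically has
all (listed) coefficients zero. -/
lemma Rep.coeff_zero (h : Rep f F c) (hf0 : ∀ x, f x = 0) {m} (hm : m ∈ F) : c m = 0 := by
  have hzero : ∀ x, (∑ k ∈ F, c k * ek k x) * ek (-m) x = 0 := by
    intro x
    rw [← h x, hf0 x]
    simp
  have hint : ∫ x in Set.Icc (0 : (Fin n → ℝ) × (Fin ℓ → ℝ)) 1,
      (∑ k ∈ F, c k * ek k x) * ek (-m) x = 0 := by
    simp_rw [hzero]
    simp
  rw [show (fun x => (∑ k ∈ F, c k * ek k x) * ek (-m) x)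
        = fun x => ∑ k ∈ F, c k * ek (k + (-m)) x from ?_] at hint
  · rw [integral_finset_sum] at hint
    · simp_rw [integral_const_mul, integral_ek] at hint
      have : ∀ k ∈ F, (c k * if k + -m = 0 then 1 else 0) = if k = m then c k else 0 := by
        intro k _
        by_cases hk : k = m
        · simp [hk]
        · have : ¬(k + -m = 0) := by
            intro hc
            exact hk (add_neg_eq_zero.mp hc)
          simp [this, hk]
      rw [Finset.sum_congr rfl this, Finset.sum_ite_eq' F m c, if_pos hm] at hint
      exact hint
    · intro k _
      exact (integrableOn_ek _).const_mul _
  · funext x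
    rw [Finset.sum_mul]
    apply Finset.sum_congr rfl
    intro k _
    rw [mul_assoc, ek_mul]


lemma Rep.integral_fderiv_zero (h : Rep f F c) (v) :
    ∫ x in Set.Icc (0 : (Fin n → ℝ) × (Fin ℓ → ℝ)) 1, fderiv ℝ f x v = 0 := by
  have hcoe := (h.fderiv_rep v).integral
  have : ((∫ x in Set.Icc (0 : (Fin n → ℝ) × (Fin ℓ → ℝ)) 1, fderiv ℝ f x v : ℝ) : ℂ) = 0 := by
    rw [hcoe]
    by_cases h0 : (0 : (Fin n → ℤ) × (Fin ℓ → ℤ)) ∈ F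
    · rw [if_pos h0, lin_zero]
      simp
    · rw [if_neg h0]
  exact_mod_cast this

lemma Rep.sub {f' : (Fin n → ℝ) × (Fin ℓ → ℝ) → ℝ} {F' : Finset ((Fin n → ℤ) × (Fin ℓ → ℤ))}
    {c' : ((Fin n → ℤ) × (Fin ℓ → ℤ)) → ℂ} (h : Rep f F c) (h' : Rep f' F' c') :
    Rep (fun x => f x - f' x) (F ∪ F')
      (fun k => (if k ∈ F then c k else 0) - (if k ∈ F' then c' k else 0)) := by
  intro x
  have e1 : ∑ k ∈ F ∪ F', (if k ∈ F then c k else 0) * ek k x = ∑ k ∈ F, c k * ek k x := by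
    simp only [ite_mul, zero_mul]
    rw [Finset.sum_ite_mem, Finset.union_inter_cancel_left]
  have e2 : ∑ k ∈ F ∪ F', (if k ∈ F' then c' k else 0) * ek k x = ∑ k ∈ F', c' k * ek k x := by
    simp only [ite_mul, zero_mul]
    rw [Finset.sum_ite_mem, Finset.union_inter_cancel_right]
  simp only [sub_mul, Finset.sum_sub_distrib, e1, e2]
  push_cast
  rw [← h x, ← h' x]


lemma Rep.const_of_deriv_zero (h : Rep f F c) {v}
    (hind : ∀ k : (Fin n → ℤ) × (Fin ℓ → ℤ), k ≠ 0 → lin k v ≠ 0)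
    (hd : ∀ x, fderiv ℝ f x v = 0) (x y) : f x = f y := by
  have hrep' := h.fderiv_rep v
  have hc0 : ∀ m ∈ F, m ≠ 0 → c m = 0 := by
    intro m hm hm0
    have h0 := hrep'.coeff_zero hd hm
    have hne : (2 * (π:ℂ) * Complex.I * ((lin m v : ℝ) : ℂ)) ≠ 0 := by
      simp [Real.pi_ne_zero, Complex.I_ne_zero, Complex.ofReal_ne_zero, hind m hm0]
    exact (mul_eq_zero.mp h0).resolve_right hne
  have hfc : ((f x : ℝ) : ℂ) = ((f y : ℝ) : ℂ) := by
    rw [h x, h y]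
    apply Finset.sum_congr rfl
    intro k hk
    by_cases hk0 : k = 0
    · subst hk0; rw [ek_zero, ek_zero]
    · rw [hc0 k hk hk0]; simp
  exact_mod_cast hfc

lemma Rep.fderiv_continuous (h : Rep f F c) (v) :
    Continuous (fun x => fderiv ℝ f x v) :=
  (h.fderiv_rep v).continuous

end TriAux


open TriAux in
lemma isTrigPoly_rep {n ℓ : ℕ} {f : (Fin n → ℝ) × (Fin ℓ → ℝ) → ℝ}
    (h : IsTrigPolyOnTorus n ℓ f) : ∃ F c, Rep f F c := by
  obtain ⟨F, c, hx⟩ := h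
  exact ⟨F, c, hx⟩

open TriAux in
/-- solvability of the triangular cohomological system.
If `𝔏_{ω,α} ξ^N = η^N` has a (trigonometric polynomial) solution then `⟨η^N⟩ = 0`;
moreover, if `⟨T⟩` is invertible and `ξ^L` solves `𝔏_{ω,α} ξ^L = η^L − T ξ^N` exactly,
then the average `⟨ξ^N⟩` is uniquely determined by the zero-average (solvability)
condition of that second equation, namely `⟨ξ^N⟩ = ⟨T⟩⁻¹ ⟨η^L − T R_{ω,α}(η^N)⟩`,
`R_{ω,α}(η^N)` being the zero-average solution of the first equation.
Here `𝔏_{ω,α} f (x) = −Df(x)(ω,α)`. -/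
theorem triangular_system_solvability (n ℓ : ℕ) (ω : Fin n → ℝ) (α : Fin ℓ → ℝ)
    (hind : ∀ (k : (Fin n → ℤ) × (Fin ℓ → ℤ)), k ≠ (0, 0) →
      (∑ i, (k.1 i : ℝ) * ω i) + ∑ j, (k.2 j : ℝ) * α j ≠ 0)
    (T : (Fin n → ℝ) × (Fin ℓ → ℝ) → Matrix (Fin n) (Fin n) ℝ)
    (ηL ηN ξL ξN RN : (Fin n → ℝ) × (Fin ℓ → ℝ) → Fin n → ℝ)
    (hT : ∀ i j, IsTrigPolyOnTorus n ℓ (fun x => T x i j))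
    (hηL : ∀ i, IsTrigPolyOnTorus n ℓ (fun x => ηL x i))
    (hηN : ∀ i, IsTrigPolyOnTorus n ℓ (fun x => ηN x i))
    (hξL : ∀ i, IsTrigPolyOnTorus n ℓ (fun x => ξL x i))
    (hξN : ∀ i, IsTrigPolyOnTorus n ℓ (fun x => ξN x i))
    (hRN : ∀ i, IsTrigPolyOnTorus n ℓ (fun x => RN x i))
    -- `ξ^N` solves the first equation
    (hξNsol : ∀ x, -(fderiv ℝ ξN x (ω, α)) = ηN x)
    -- `RN = R_{ω,α}(η^N)` : the zero-average solution of the first equation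
    (hRNsol : ∀ x, -(fderiv ℝ RN x (ω, α)) = ηN x)
    (hRNavg : ∀ i, torusAvg n ℓ (fun x => RN x i) = 0)
    -- `ξ^L` solves the second equation exactly (its solvability condition)
    (hξLsol : ∀ x, -(fderiv ℝ ξL x (ω, α)) = fun i => ηL x i - (T x).mulVec (ξN x) i)
    (aT : Matrix (Fin n) (Fin n) ℝ)
    (haT : aT = Matrix.of fun i j => torusAvg n ℓ (fun x => T x i j))
    (haTinv : IsUnit aT.det) :
    (∀ i, torusAvg n ℓ (fun x => ηN x i) = 0) ∧
      (fun i => torusAvg n ℓ (fun x => ξN x i)) =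
        aT⁻¹.mulVec (fun i => torusAvg n ℓ (fun x => ηL x i - (T x).mulVec (RN x) i)) := by
  classical

  set v : (Fin n → ℝ) × (Fin ℓ → ℝ) := (ω, α) with hv
  have hind' : ∀ k : (Fin n → ℤ) × (Fin ℓ → ℤ), k ≠ 0 → lin k v ≠ 0 :=
    fun k hk => hind k hk
  -- representations
  have repξN : ∀ i, ∃ F c, Rep (fun x => ξN x i) F c := fun i => isTrigPoly_rep (hξN i)
  have repRN : ∀ i, ∃ F c, Rep (fun x => RN x i) F c := fun i => isTrigPoly_rep (hRN i)
  have repξL : ∀ i, ∃ F c, Rep (fun x => ξL x i) F c := fun i => isTrigPoly_rep (hξL i)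
  have repT : ∀ i j, ∃ F c, Rep (fun x => T x i j) F c := fun i j => isTrigPoly_rep (hT i j)
  -- componentwise fderiv
  have comp_fderiv : ∀ (Φ : (Fin n → ℝ) × (Fin ℓ → ℝ) → Fin n → ℝ),
      (∀ i, ∃ F c, Rep (fun x => Φ x i) F c) →
      ∀ x w, ∀ i, fderiv ℝ Φ x w i = fderiv ℝ (fun y => Φ y i) x w := by
    intro Φ hΦ x w i
    have hdiff : ∀ i, DifferentiableAt ℝ (fun y => Φ y i) x := fun i =>
      (hΦ i).choose_spec.choose_spec.differentiableAt x
    have hpi := fderiv_pi (𝕜 := ℝ) (φ := fun i y => Φ y i) (x := x) hdiff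
    calc fderiv ℝ Φ x w i = (fderiv ℝ (fun y i => Φ y i) x) w i := rfl
      _ = fderiv ℝ (fun y => Φ y i) x w := by rw [hpi]; rfl
  -- componentwise equations
  have hξNsol' : ∀ x i, fderiv ℝ (fun y => ξN y i) x v = -(ηN x i) := by
    intro x i
    rw [← comp_fderiv ξN repξN x v i]
    have := congrFun (hξNsol x) i
    simp only [Pi.neg_apply] at this
    linarith
  have hRNsol' : ∀ x i, fderiv ℝ (fun y => RN y i) x v = -(ηN x i) := by
    intro x i
    rw [← comp_fderiv RN repRN x v i]
    have := congrFun (hRNsol x) i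
    simp only [Pi.neg_apply] at this
    linarith
  have hξLsol' : ∀ x i, fderiv ℝ (fun y => ξL y i) x v
      = -(ηL x i - (T x).mulVec (ξN x) i) := by
    intro x i
    rw [← comp_fderiv ξL repξL x v i]
    have := congrFun (hξLsol x) i
    simp only [Pi.neg_apply] at this
    linarith
  -- Part 1 : averages of ηN vanish
  have part1 : ∀ i, torusAvg n ℓ (fun x => ηN x i) = 0 := by
    intro i
    obtain ⟨F, c, hrep⟩ := repξN i
    have heq : (fun x => ηN x i)
        = fun x => -(fderiv ℝ (fun y => ξN y i) x v) := by
      funext x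
      rw [hξNsol' x i, neg_neg]
    rw [torusAvg, heq, integral_neg, hrep.integral_fderiv_zero v, neg_zero]
  -- constancy of ξN - RN
  have hconst : ∀ i x, ξN x i - RN x i = ξN 0 i - RN 0 i := by
    intro i x
    obtain ⟨F1, c1, r1⟩ := repξN i
    obtain ⟨F2, c2, r2⟩ := repRN i
    have rd := r1.sub r2
    have hd : ∀ y, fderiv ℝ (fun z => ξN z i - RN z i) y v = 0 := by
      intro y
      rw [fderiv_fun_sub (r1.differentiableAt y) (r2.differentiableAt y)]
      simp only [ContinuousLinearMap.coe_sub', Pi.sub_apply]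
      rw [hξNsol' y i, hRNsol' y i]
      ring
    exact rd.const_of_deriv_zero hind' hd x 0
  set cv : Fin n → ℝ := fun i => ξN 0 i - RN 0 i with hcv
  have hsplitξN : ∀ x i, ξN x i = RN x i + cv i := by
    intro x i
    have := hconst i x
    simp only [hcv]
    linarith
  -- integrability facts
  have intRN : ∀ i, IntegrableOn (fun x => RN x i)
      (Set.Icc (0 : (Fin n → ℝ) × (Fin ℓ → ℝ)) 1) volume := by
    intro i
    obtain ⟨F, c, r⟩ := repRN i
    exact r.integrableOn
  have intconst : ∀ r : ℝ, IntegrableOn (fun _ : (Fin n → ℝ) × (Fin ℓ → ℝ) => r)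
      (Set.Icc (0 : (Fin n → ℝ) × (Fin ℓ → ℝ)) 1) volume := by
    intro r
    refine (MeasureTheory.integrableOn_const_iff (C := r)).mpr (Or.inr ?_)
    rw [vol_box]
    exact ENNReal.one_lt_top
  -- average of ξN components
  have havgξN : ∀ i, torusAvg n ℓ (fun x => ξN x i) = cv i := by
    intro i
    have heq : (fun x => ξN x i) = fun x => RN x i + cv i := funext fun x => hsplitξN x i
    rw [torusAvg, heq, integral_add (intRN i) (intconst (cv i)), setIntegral_const,
      measureReal_def, vol_box]
    have := hRNavg i
    rw [torusAvg] at this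
    rw [this]
    simp
  -- average identity for the second equation
  have w_eq : ∀ i, torusAvg n ℓ (fun x => ηL x i - (T x).mulVec (RN x) i)
      = ∑ j, aT i j * cv j := by
    intro i
    obtain ⟨FL, cL, rL⟩ := repξL i
    have hpt : ∀ x, ηL x i - (T x).mulVec (RN x) i
        = (ηL x i - (T x).mulVec (ξN x) i) + ∑ j, T x i j * cv j := by
      intro x
      simp only [Matrix.mulVec, dotProduct]
      have : ∀ j, T x i j * ξN x j = T x i j * RN x j + T x i j * cv j := by
        intro j
        rw [hsplitξN x j]
        ring
      simp_rw [this, Finset.sum_add_distrib]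
      ring
    have hA : (fun x => ηL x i - (T x).mulVec (ξN x) i)
        = fun x => -(fderiv ℝ (fun y => ξL y i) x v) := by
      funext x
      rw [hξLsol' x i, neg_neg]
    have intA : IntegrableOn (fun x => ηL x i - (T x).mulVec (ξN x) i)
        (Set.Icc (0 : (Fin n → ℝ) × (Fin ℓ → ℝ)) 1) volume := by
      rw [hA]
      exact ((rL.fderiv_continuous v).neg).integrableOn_Icc
    have contT : ∀ j, Continuous (fun x => T x i j) := by
      intro j
      obtain ⟨F, c, r⟩ := repT i j
      exact r.continuous
    have intB : IntegrableOn (fun x => ∑ j, T x i j * cv j)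
        (Set.Icc (0 : (Fin n → ℝ) × (Fin ℓ → ℝ)) 1) volume := by
      exact (continuous_finset_sum _ fun j _ => (contT j).mul continuous_const).integrableOn_Icc
    have heq2 : (fun x => ηL x i - (T x).mulVec (RN x) i)
        = fun x => (ηL x i - (T x).mulVec (ξN x) i) + ∑ j, T x i j * cv j :=
      funext hpt
    rw [torusAvg, heq2, integral_add intA intB]
    have hA0 : ∫ x in Set.Icc (0 : (Fin n → ℝ) × (Fin ℓ → ℝ)) 1,
        (ηL x i - (T x).mulVec (ξN x) i) = 0 := by
      rw [hA, integral_neg, rL.integral_fderiv_zero v, neg_zero]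
    rw [hA0, zero_add]
    rw [integral_finset_sum _ (f := fun j x => T x i j * cv j) (fun j _ => ((contT j).mul continuous_const).integrableOn_Icc)]
    apply Finset.sum_congr rfl
    intro j _
    rw [MeasureTheory.integral_mul_const]
    congr 1
    rw [haT]
    rfl
  refine ⟨part1, ?_⟩
  have h1 : (fun i => torusAvg n ℓ (fun x => ξN x i)) = cv := funext havgξN
  have h2 : (fun i => torusAvg n ℓ (fun x => ηL x i - (T x).mulVec (RN x) i))
      = aT.mulVec cv := by
    funext i
    rw [w_eq i]
    simp [Matrix.mulVec, dotProduct]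
  rw [h1, h2, Matrix.mulVec_mulVec, Matrix.nonsing_inv_mul aT haTinv, Matrix.one_mulVec]
end
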